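/- arXiv:2008.00056 — 2 statements merged into one kernel-verified Lean document; each statement's English description precedes it below -/
import Mathlib

section
/- Let $m_k, n_k > 0$ satisfy $m_k = n_k(1 - e^{-2\nu\lambda_k^2 t})^{1/2}$ for fixed $t, \nu > 0$, where $\lambda_k \sim c k^{1/d}$ with $c > 0$. Then $\sum_{k=1}^{\infty} \left(\frac{m_k}{n_k} - 1\right)^2 < \infty$. -/
open Filter

theorem stmt_5 (ν t c : ℝ) (d : ℕ) (hν : 0 < ν) (ht : 0 < t) (hc : 0 < c) (hd : 1 ≤ d)
    (lam m n : ℕ → ℝ) (hn : ∀ k, 0 < n k) (hm : ∀ k, 0 < m k)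
    (hasymp : Tendsto (fun k : ℕ => lam k / (c * (k : ℝ) ^ (1 / (d : ℝ)))) atTop (nhds 1))
    (hmn : ∀ k, m k = n k * Real.sqrt (1 - Real.exp (-(2 * ν * (lam k) ^ 2 * t)))) :
    Summable (fun k : ℕ => (m k / n k - 1) ^ 2) := by
  set a : ℝ := ν * t * c ^ 2 / 2 with ha
  have ha0 : 0 < a := by positivity
  have hdr : (0:ℝ) < (d:ℝ) := by exact_mod_cast Nat.lt_of_lt_of_le Nat.zero_lt_one hd
  -- eventual lower bound on lam
  have hev : ∀ᶠ k : ℕ in atTop, (1:ℝ)/2 ≤ lam k / (c * (k : ℝ) ^ (1 / (d : ℝ))) :=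
    hasymp.eventually (eventually_ge_nhds (by norm_num))
  apply summable_of_isBigO_nat (g := fun k : ℕ => (k:ℝ) ^ (-2 : ℝ))
    (Real.summable_nat_rpow.mpr (by norm_num))
  rw [Asymptotics.isBigO_iff]
  refine ⟨(d.factorial : ℝ) / a ^ d, ?_⟩
  filter_upwards [hev, eventually_ge_atTop 1] with k hk hk1
  have hk0 : (0:ℝ) < (k:ℝ) := by exact_mod_cast hk1
  have hkp : (0:ℝ) < (k:ℝ) ^ (1 / (d:ℝ)) := Real.rpow_pos_of_pos hk0 _
  have hlam : c / 2 * (k:ℝ) ^ (1 / (d:ℝ)) ≤ lam k := by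
    have := (div_le_div_iff₀ (by norm_num) (by positivity)).mp hk
    linarith
  have hlam0 : 0 < lam k := lt_of_lt_of_le (by positivity) hlam
  set E : ℝ := Real.exp (-(2 * ν * (lam k) ^ 2 * t)) with hE
  have hE0 : 0 < E := Real.exp_pos _
  have hE1 : E ≤ 1 := Real.exp_le_one_iff.mpr (by simp only [neg_nonpos]; positivity)
  -- step 1: (m k / n k - 1)^2 ≤ E
  have hmn' : m k / n k = Real.sqrt (1 - E) := by
    rw [hmn k, mul_comm, mul_div_assoc, div_self (hn k).ne', mul_one]
  have hsub : 0 ≤ 1 - E := by linarith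
  have hsq1 : Real.sqrt (1 - E) ≤ 1 := by
    exact Real.sqrt_le_one.mpr (by linarith)
  have hsq2 : 1 - E ≤ Real.sqrt (1 - E) := by
    nlinarith [Real.sq_sqrt hsub, Real.sqrt_nonneg (1 - E)]
  have h1 : (m k / n k - 1) ^ 2 ≤ E := by
    rw [hmn']
    nlinarith
  -- step 2: E ≤ exp (-(a * k^(2/d)))
  have hk2d : ((k:ℝ) ^ ((2:ℝ) / (d:ℝ))) = ((k:ℝ) ^ ((1:ℝ) / (d:ℝ))) ^ 2 := by
    rw [← Real.rpow_natCast ((k:ℝ) ^ ((1:ℝ)/(d:ℝ))) 2, ← Real.rpow_mul hk0.le]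
    congr 1
    push_cast
    ring
  have h2 : E ≤ Real.exp (-(a * (k:ℝ) ^ ((2:ℝ)/(d:ℝ)))) := by
    apply Real.exp_le_exp.mpr
    rw [hk2d]
    have : (c/2 * (k:ℝ) ^ ((1:ℝ)/(d:ℝ))) ^ 2 ≤ (lam k) ^ 2 := by
      apply sq_le_sq' _ hlam
      nlinarith
    rw [ha]
    nlinarith [mul_le_mul_of_nonneg_left this (by positivity : (0:ℝ) ≤ 2 * ν * t), mul_pos hν ht]
  -- step 3: exp (-(a * y)) ≤ d! / (a*y)^d with (a*y)^d = a^d * k^2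
  have hy : (0:ℝ) < (k:ℝ) ^ ((2:ℝ)/(d:ℝ)) := Real.rpow_pos_of_pos hk0 _
  have hpow : (a * (k:ℝ) ^ ((2:ℝ)/(d:ℝ))) ^ d / (d.factorial : ℝ)
      ≤ Real.exp (a * (k:ℝ) ^ ((2:ℝ)/(d:ℝ))) :=
    Real.pow_div_factorial_le_exp _ (by positivity) d
  have hfac : (0:ℝ) < (d.factorial : ℝ) := by exact_mod_cast d.factorial_pos
  have h3 : Real.exp (-(a * (k:ℝ) ^ ((2:ℝ)/(d:ℝ))))
      ≤ (d.factorial : ℝ) / (a * (k:ℝ) ^ ((2:ℝ)/(d:ℝ))) ^ d := by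
    rw [Real.exp_neg, ← one_div, div_le_div_iff₀ (Real.exp_pos _) (by positivity)]
    rw [div_le_iff₀ hfac] at hpow
    linarith [hpow]
  have hyd : ((k:ℝ) ^ ((2:ℝ)/(d:ℝ))) ^ d = (k:ℝ) ^ (2:ℝ) := by
    rw [← Real.rpow_natCast ((k:ℝ) ^ ((2:ℝ)/(d:ℝ))) d, ← Real.rpow_mul hk0.le]
    rw [div_mul_cancel₀]
    exact hdr.ne'
  have h4 : (d.factorial : ℝ) / (a * (k:ℝ) ^ ((2:ℝ)/(d:ℝ))) ^ d
      = (d.factorial : ℝ) / a ^ d * (k:ℝ) ^ (-2:ℝ) := by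
    rw [mul_pow, hyd, Real.rpow_neg hk0.le, div_mul_eq_div_div, div_div]
    ring_nf
  have hnorm : ‖(m k / n k - 1) ^ 2‖ = (m k / n k - 1) ^ 2 := by
    rw [Real.norm_eq_abs, abs_of_nonneg (sq_nonneg _)]
  rw [hnorm, Real.norm_eq_abs, abs_of_nonneg (Real.rpow_nonneg hk0.le _)]
  calc (m k / n k - 1) ^ 2 ≤ E := h1
    _ ≤ Real.exp (-(a * (k:ℝ) ^ ((2:ℝ)/(d:ℝ)))) := h2
    _ ≤ (d.factorial : ℝ) / (a * (k:ℝ) ^ ((2:ℝ)/(d:ℝ))) ^ d := h3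
    _ = (d.factorial : ℝ) / a ^ d * (k:ℝ) ^ (-2:ℝ) := h4
end

section
/- Let $\breve{W}$ be the two-sided Brownian motion and let $f, g : \mathbb{R} \to \mathbb{R}$ be integrable with $\int |x f(x)|\,dx < \infty$ and $\int |x g(x)|\,dx < \infty$. Define $\breve{W}[f] = \int_{\mathbb{R}} f(x)\breve{W}(x)\,dx$ (and similarly for $g$). Then $\mathbb{E}\big(\breve{W}[f]\breve{W}[g]\big) = \int_{\mathbb{R}} F(x) G(x)\,dx$, where $F$ and $G$ are the antiderivatives of $f$ and $g$ defined by $F(x) = \int_{-\infty}^x f$ for $x<0$ and $F(x) = -\int_x^{+\infty} f$ for $x>0$. -/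
open MeasureTheory

noncomputable def kker (x t : ℝ) : ℝ :=
  if 0 ≤ t then (if t < x then 1 else 0) else (if x ≤ t then 1 else 0)

lemma kker_eq (x t : ℝ) :
    kker x t = (if 0 ≤ x then Set.Ico (0:ℝ) x else Set.Ico x 0).indicator 1 t := by
  unfold kker
  by_cases hx : 0 ≤ x <;> by_cases ht : 0 ≤ t <;>
    simp only [hx, ht, if_true, if_false, Set.indicator_apply, Set.mem_Ico, Pi.one_apply] <;>
    split_ifs <;> simp_all <;> linarith

lemma kker_nonneg (x t : ℝ) : 0 ≤ kker x t := by
  unfold kker; split_ifs <;> norm_num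

lemma kker_le_one (x t : ℝ) : kker x t ≤ 1 := by
  unfold kker; split_ifs <;> norm_num

lemma kker_meas : Measurable (Function.uncurry kker) := by
  unfold Function.uncurry kker
  exact Measurable.ite (measurableSet_le measurable_const measurable_snd)
    (Measurable.ite (measurableSet_lt measurable_snd measurable_fst) measurable_const
      measurable_const)
    (Measurable.ite (measurableSet_le measurable_fst measurable_snd) measurable_const
      measurable_const)

lemma kker_int (x : ℝ) : Integrable (fun t => kker x t) volume := by
  have h : (fun t => kker x t)
      = (if 0 ≤ x then Set.Ico (0:ℝ) x else Set.Ico x 0).indicator 1 := funext (kker_eq x)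
  rw [h]
  by_cases hx : 0 ≤ x <;> simp only [hx, if_true, if_false] <;>
    exact (integrable_indicator_iff measurableSet_Ico).2
      (integrableOn_const (by rw [Real.volume_Ico]; exact ENNReal.ofReal_ne_top))

lemma kker_integral (x : ℝ) : ∫ t, kker x t = |x| := by
  have h : (fun t => kker x t)
      = (if 0 ≤ x then Set.Ico (0:ℝ) x else Set.Ico x 0).indicator 1 := funext (kker_eq x)
  rw [h]
  by_cases hx : 0 ≤ x <;> simp only [hx, if_true, if_false] <;>
    rw [integral_indicator_one measurableSet_Ico, measureReal_def, Real.volume_Ico, ENNReal.toReal_ofReal']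
  · rw [abs_of_nonneg hx]; rw [max_eq_left (by linarith)]; ring
  · rw [abs_of_neg (not_le.mp hx)]; rw [max_eq_left (by linarith [not_le.mp hx])]; ring

lemma kker_mul_int (x y : ℝ) : Integrable (fun t => kker x t * kker y t) volume := by
  refine Integrable.mono' (kker_int x)
    ((kker_meas.of_uncurry_left.mul kker_meas.of_uncurry_left).aestronglyMeasurable)
    (Filter.Eventually.of_forall fun t => ?_)
  rw [Real.norm_eq_abs, abs_of_nonneg (mul_nonneg (kker_nonneg x t) (kker_nonneg y t))]
  calc kker x t * kker y t ≤ kker x t * 1 :=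
        mul_le_mul_of_nonneg_left (kker_le_one y t) (kker_nonneg x t)
    _ = kker x t := mul_one _

lemma kker_mul_integral (x y : ℝ) :
    ∫ t, kker x t * kker y t = if x * y > 0 then min |x| |y| else 0 := by
  have h : (fun t => kker x t * kker y t)
      = ((if 0 ≤ x then Set.Ico (0:ℝ) x else Set.Ico x 0)
          ∩ (if 0 ≤ y then Set.Ico (0:ℝ) y else Set.Ico y 0)).indicator 1 := by
    funext t
    rw [kker_eq, kker_eq, ← Set.inter_indicator_mul]
    simp only [Pi.one_apply, mul_one]
    rfl
  rw [h]
  by_cases hx : 0 ≤ x <;> by_cases hy : 0 ≤ y <;>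
    simp only [hx, hy, if_true, if_false] <;>
    rw [integral_indicator_one (measurableSet_Ico.inter measurableSet_Ico),
      Set.Ico_inter_Ico, measureReal_def, Real.volume_Ico, ENNReal.toReal_ofReal']
  · -- 0 ≤ x, 0 ≤ y
    rw [abs_of_nonneg hx, abs_of_nonneg hy, max_self, sub_zero,
      max_eq_left (le_min hx hy)]
    split_ifs with hp
    · rfl
    · rcases mul_eq_zero.mp (le_antisymm (not_lt.mp hp) (mul_nonneg hx hy)) with h0 | h0 <;>
        simp [h0, min_eq_left, min_eq_right, hx, hy]
  · have hy' := not_le.mp hy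
    rw [if_neg (by nlinarith : ¬ x * y > 0), min_eq_right hx, max_eq_left hy'.le]
    norm_num
  · have hx' := not_le.mp hx
    rw [if_neg (by nlinarith : ¬ x * y > 0), max_eq_right hx'.le, min_eq_left hy]
    norm_num
  · have hx' := not_le.mp hx
    have hy' := not_le.mp hy
    rw [abs_of_neg hx', abs_of_neg hy', if_pos (mul_pos_of_neg_of_neg hx' hy'), min_self,
      zero_sub, max_eq_left (by linarith [max_lt hx' hy'] : (0:ℝ) ≤ -max x y)]
    exact (min_neg_neg x y).symm

lemma integral_mul_kker (f : ℝ → ℝ) (t : ℝ) :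
    ∫ x, f x * kker x t
      = if t < 0 then (∫ x in Set.Iic t, f x) else (∫ x in Set.Ioi t, f x) := by
  by_cases ht : t < 0
  · rw [if_pos ht, ← integral_indicator measurableSet_Iic]
    congr 1; funext x
    simp [kker, not_le.mpr ht, Set.indicator_apply, mul_ite]
  · rw [if_neg ht, ← integral_indicator measurableSet_Ioi]
    congr 1; funext x
    simp [kker, not_lt.mp ht, Set.indicator_apply, mul_ite]

lemma antider_mul_kker (f g : ℝ → ℝ) (t : ℝ) :
    (∫ x, f x * kker x t) * (∫ y, g y * kker y t)
      = (if t < 0 then ∫ x in Set.Iic t, f x else -∫ x in Set.Ici t, f x)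
        * (if t < 0 then ∫ x in Set.Iic t, g x else -∫ x in Set.Ici t, g x) := by
  rw [integral_mul_kker, integral_mul_kker]
  by_cases ht : t < 0
  · simp [ht]
  · simp only [ht, if_false]
    rw [integral_Ici_eq_integral_Ioi, integral_Ici_eq_integral_Ioi]
    ring

/-- The antiderivative of `f` normalized to vanish at `±∞`:
`F(x) = ∫_{-∞}^x f` for `x < 0` and `F(x) = -∫_x^{+∞} f` for `x > 0`. -/
noncomputable def antider (f : ℝ → ℝ) (x : ℝ) : ℝ :=
  if x < 0 then ∫ t in Set.Iic x, f t else -∫ t in Set.Ici x, f t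

lemma antider_mul_kker' (f g : ℝ → ℝ) (t : ℝ) :
    (∫ x, f x * kker x t) * (∫ y, g y * kker y t) = antider f t * antider g t := by
  unfold antider
  exact antider_mul_kker f g t

theorem stmt_14 {Ω : Type*} [MeasurableSpace Ω] (P : Measure Ω) [IsProbabilityMeasure P]
    (brW : ℝ → Ω → ℝ)
    (hmeas : Measurable (Function.uncurry brW))
    (hcov : ∀ x y : ℝ, ∫ ω, brW x ω * brW y ω ∂P = if x * y > 0 then min |x| |y| else 0)
    (f g : ℝ → ℝ) (hf : Integrable f) (hg : Integrable g)
    (hf1 : Integrable (fun x => x * f x)) (hg1 : Integrable (fun x => x * g x)) :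
    ∫ ω, (∫ x : ℝ, f x * brW x ω) * (∫ x : ℝ, g x * brW x ω) ∂P
      = ∫ x : ℝ, antider f x * antider g x := by
  have hWm : ∀ x : ℝ, Measurable (brW x) := fun x => hmeas.of_uncurry_left
  -- squares are integrable off 0, with known integral
  have hsqval : ∀ x : ℝ, x ≠ 0 → ∫ ω, brW x ω * brW x ω ∂P = |x| := by
    intro x hx
    rw [hcov, if_pos (mul_self_pos.mpr hx), min_self]
  have hsq : ∀ x : ℝ, x ≠ 0 → Integrable (fun ω => brW x ω * brW x ω) P := by
    intro x hx
    by_contra h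
    have h0 := hsqval x hx
    rw [integral_undef h] at h0
    exact hx (abs_eq_zero.mp h0.symm)
  have hprod : ∀ x y : ℝ, x ≠ 0 → y ≠ 0 → Integrable (fun ω => brW x ω * brW y ω) P := by
    intro x y hx hy
    refine Integrable.mono' (((hsq x hx).add (hsq y hy)).div_const 2)
      (((hWm x).mul (hWm y)).aestronglyMeasurable)
      (Filter.Eventually.of_forall fun ω => ?_)
    simp only [Pi.add_apply]
    rw [Real.norm_eq_abs, abs_mul]
    nlinarith [sq_nonneg (|brW x ω| - |brW y ω|), abs_mul_abs_self (brW x ω),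
      abs_mul_abs_self (brW y ω), abs_nonneg (brW x ω), abs_nonneg (brW y ω)]
  have hprodnorm : ∀ x y : ℝ, x ≠ 0 → y ≠ 0 →
      ∫ ω, |brW x ω * brW y ω| ∂P ≤ (|x| + |y|) / 2 := by
    intro x y hx hy
    have hint : Integrable (fun ω => (brW x ω * brW x ω + brW y ω * brW y ω) / 2) P :=
      ((hsq x hx).add (hsq y hy)).div_const 2
    calc ∫ ω, |brW x ω * brW y ω| ∂P
        ≤ ∫ ω, (brW x ω * brW x ω + brW y ω * brW y ω) / 2 ∂P := by
          refine integral_mono (hprod x y hx hy).abs hint fun ω => ?_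
          rw [abs_mul]
          nlinarith [sq_nonneg (|brW x ω| - |brW y ω|), abs_mul_abs_self (brW x ω),
            abs_mul_abs_self (brW y ω), abs_nonneg (brW x ω), abs_nonneg (brW y ω)]
      _ = (|x| + |y|) / 2 := by
          rw [integral_div, integral_add (hsq x hx) (hsq y hy), hsqval x hx, hsqval y hy]
  set ν : Measure (ℝ × ℝ) := (volume : Measure ℝ).prod volume with hν
  -- measurability of the big integrand
  have hKm : AEStronglyMeasurable
      (fun p : (ℝ × ℝ) × Ω => (f p.1.1 * brW p.1.1 p.2) * (g p.1.2 * brW p.1.2 p.2))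
      (ν.prod P) := by
    have h1 : AEStronglyMeasurable (fun p : (ℝ × ℝ) × Ω => f p.1.1) (ν.prod P) :=
      hf.aestronglyMeasurable.comp_fst.comp_fst
    have h2 : Measurable (fun p : (ℝ × ℝ) × Ω => brW p.1.1 p.2) :=
      hmeas.comp (measurable_fst.fst.prodMk measurable_snd)
    have h3 : AEStronglyMeasurable (fun p : (ℝ × ℝ) × Ω => g p.1.2) (ν.prod P) :=
      hg.aestronglyMeasurable.comp_snd.comp_fst
    have h4 : Measurable (fun p : (ℝ × ℝ) × Ω => brW p.1.2 p.2) :=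
      hmeas.comp (measurable_fst.snd.prodMk measurable_snd)
    exact (h1.mul h2.aestronglyMeasurable).mul (h3.mul h4.aestronglyMeasurable)
  -- a.e. both coordinates are nonzero
  have hae : ∀ᵐ z : ℝ × ℝ ∂ν, z.1 ≠ 0 ∧ z.2 ≠ 0 := by
    have h1 : ν {z : ℝ × ℝ | z.1 = 0} = 0 := by
      have he : {z : ℝ × ℝ | z.1 = 0} = ({0} : Set ℝ) ×ˢ (Set.univ : Set ℝ) := by
        ext ⟨a, b⟩; simp [eq_comm]
      rw [he, hν, Measure.prod_prod]
      simp
    have h2 : ν {z : ℝ × ℝ | z.2 = 0} = 0 := by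
      have he : {z : ℝ × ℝ | z.2 = 0} = (Set.univ : Set ℝ) ×ˢ ({0} : Set ℝ) := by
        ext ⟨a, b⟩; simp [eq_comm]
      rw [he, hν, Measure.prod_prod]
      simp
    have h3 : ν ({z : ℝ × ℝ | z.1 = 0} ∪ {z : ℝ × ℝ | z.2 = 0}) = 0 :=
      measure_union_null h1 h2
    rw [ae_iff]
    refine measure_mono_null (fun z hz => ?_) h3
    simp only [Set.mem_setOf_eq, Set.mem_union] at hz ⊢
    tauto
  -- integrability of the big integrand
  have hKint : Integrable
      (fun p : (ℝ × ℝ) × Ω => (f p.1.1 * brW p.1.1 p.2) * (g p.1.2 * brW p.1.2 p.2))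
      (ν.prod P) := by
    refine (integrable_prod_iff hKm).2 ⟨?_, ?_⟩
    · filter_upwards [hae] with z hz
      have he : (fun ω => (f z.1 * brW z.1 ω) * (g z.2 * brW z.2 ω))
          = fun ω => (f z.1 * g z.2) * (brW z.1 ω * brW z.2 ω) := by
        funext ω; ring
      rw [he]
      exact (hprod z.1 z.2 hz.1 hz.2).const_mul _
    · have hbound : Integrable
          (fun z : ℝ × ℝ => (|z.1 * f z.1| * |g z.2| + |f z.1| * |z.2 * g z.2|) / 2) ν :=
        ((hf1.abs.mul_prod hg.abs).add (hf.abs.mul_prod hg1.abs)).div_const 2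
      refine Integrable.mono' hbound hKm.norm.integral_prod_right' ?_
      filter_upwards [hae] with z hz
      rw [Real.norm_eq_abs, abs_of_nonneg (integral_nonneg fun ω => norm_nonneg _)]
      have he : ∀ ω, ‖(f z.1 * brW z.1 ω) * (g z.2 * brW z.2 ω)‖
          = |f z.1| * |g z.2| * |brW z.1 ω * brW z.2 ω| := by
        intro ω
        rw [Real.norm_eq_abs, abs_mul, abs_mul, abs_mul, abs_mul]
        ring
      calc ∫ ω, ‖(f z.1 * brW z.1 ω) * (g z.2 * brW z.2 ω)‖ ∂P
          = |f z.1| * |g z.2| * ∫ ω, |brW z.1 ω * brW z.2 ω| ∂P := by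
            simp_rw [he]; rw [integral_const_mul]
        _ ≤ |f z.1| * |g z.2| * ((|z.1| + |z.2|) / 2) :=
            mul_le_mul_of_nonneg_left (hprodnorm z.1 z.2 hz.1 hz.2)
              (mul_nonneg (abs_nonneg _) (abs_nonneg _))
        _ = (|z.1 * f z.1| * |g z.2| + |f z.1| * |z.2 * g z.2|) / 2 := by
            rw [abs_mul, abs_mul]; ring
  -- Step A : pointwise product of integrals as a double integral
  have stepA : ∀ ω, (∫ x, f x * brW x ω) * (∫ x, g x * brW x ω)
      = ∫ z : ℝ × ℝ, (f z.1 * brW z.1 ω) * (g z.2 * brW z.2 ω) ∂ν := fun ω =>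
    (integral_prod_mul (fun x => f x * brW x ω) (fun y => g y * brW y ω)).symm
  -- inner ω-integral via the covariance
  have hinner : ∀ z : ℝ × ℝ, ∫ ω, (f z.1 * brW z.1 ω) * (g z.2 * brW z.2 ω) ∂P
      = f z.1 * g z.2 * (if z.1 * z.2 > 0 then min |z.1| |z.2| else 0) := by
    intro z
    have he : (fun ω => (f z.1 * brW z.1 ω) * (g z.2 * brW z.2 ω))
        = fun ω => (f z.1 * g z.2) * (brW z.1 ω * brW z.2 ω) := by
      funext ω; ring
    rw [he, integral_const_mul, hcov]
  -- integrability for the second Fubini (deterministic)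
  have hLm : AEStronglyMeasurable
      (fun p : (ℝ × ℝ) × ℝ => (f p.1.1 * kker p.1.1 p.2) * (g p.1.2 * kker p.1.2 p.2))
      (ν.prod volume) := by
    have h1 : AEStronglyMeasurable (fun p : (ℝ × ℝ) × ℝ => f p.1.1) (ν.prod volume) :=
      hf.aestronglyMeasurable.comp_fst.comp_fst
    have h2 : Measurable (fun p : (ℝ × ℝ) × ℝ => kker p.1.1 p.2) :=
      kker_meas.comp (measurable_fst.fst.prodMk measurable_snd)
    have h3 : AEStronglyMeasurable (fun p : (ℝ × ℝ) × ℝ => g p.1.2) (ν.prod volume) :=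
      hg.aestronglyMeasurable.comp_snd.comp_fst
    have h4 : Measurable (fun p : (ℝ × ℝ) × ℝ => kker p.1.2 p.2) :=
      kker_meas.comp (measurable_fst.snd.prodMk measurable_snd)
    exact (h1.mul h2.aestronglyMeasurable).mul (h3.mul h4.aestronglyMeasurable)
  have hLint : Integrable
      (fun p : (ℝ × ℝ) × ℝ => (f p.1.1 * kker p.1.1 p.2) * (g p.1.2 * kker p.1.2 p.2))
      (ν.prod volume) := by
    refine (integrable_prod_iff hLm).2 ⟨?_, ?_⟩
    · refine Filter.Eventually.of_forall fun z => ?_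
      have he : (fun t => (f z.1 * kker z.1 t) * (g z.2 * kker z.2 t))
          = fun t => (f z.1 * g z.2) * (kker z.1 t * kker z.2 t) := by
        funext t; ring
      rw [he]
      exact (kker_mul_int z.1 z.2).const_mul _
    · have hbound : Integrable (fun z : ℝ × ℝ => |z.1 * f z.1| * |g z.2|) ν :=
        hf1.abs.mul_prod hg.abs
      refine Integrable.mono' hbound hLm.norm.integral_prod_right'
        (Filter.Eventually.of_forall fun z => ?_)
      rw [Real.norm_eq_abs, abs_of_nonneg (integral_nonneg fun t => norm_nonneg _)]
      have he : ∀ t, ‖(f z.1 * kker z.1 t) * (g z.2 * kker z.2 t)‖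
          = |f z.1| * |g z.2| * (kker z.1 t * kker z.2 t) := by
        intro t
        rw [Real.norm_eq_abs, abs_mul, abs_mul, abs_mul,
          abs_of_nonneg (kker_nonneg z.1 t), abs_of_nonneg (kker_nonneg z.2 t)]
        ring
      calc ∫ t, ‖(f z.1 * kker z.1 t) * (g z.2 * kker z.2 t)‖
          = |f z.1| * |g z.2| * ∫ t, kker z.1 t * kker z.2 t := by
            simp_rw [he]; rw [integral_const_mul]
        _ ≤ |f z.1| * |g z.2| * ∫ t, kker z.1 t := by
            refine mul_le_mul_of_nonneg_left ?_ (mul_nonneg (abs_nonneg _) (abs_nonneg _))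
            refine integral_mono (kker_mul_int z.1 z.2) (kker_int z.1) fun t => ?_
            calc kker z.1 t * kker z.2 t ≤ kker z.1 t * 1 :=
                  mul_le_mul_of_nonneg_left (kker_le_one z.2 t) (kker_nonneg z.1 t)
              _ = kker z.1 t := mul_one _
        _ = |z.1 * f z.1| * |g z.2| := by rw [kker_integral, abs_mul]; ring
  -- the deterministic identity
  have hdet : (∫ z : ℝ × ℝ, f z.1 * g z.2 * (if z.1 * z.2 > 0 then min |z.1| |z.2| else 0) ∂ν)
      = ∫ t : ℝ, antider f t * antider g t := by
    have h1 : ∀ z : ℝ × ℝ, f z.1 * g z.2 * (if z.1 * z.2 > 0 then min |z.1| |z.2| else 0)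
        = ∫ t, (f z.1 * kker z.1 t) * (g z.2 * kker z.2 t) := by
      intro z
      rw [← kker_mul_integral z.1 z.2, ← integral_const_mul]
      congr 1
      funext t
      ring
    simp_rw [h1]
    rw [integral_integral_swap hLint]
    have h2 : ∀ t : ℝ, (∫ z : ℝ × ℝ, (f z.1 * kker z.1 t) * (g z.2 * kker z.2 t) ∂ν)
        = antider f t * antider g t := by
      intro t
      rw [hν, integral_prod_mul (fun x => f x * kker x t) (fun y => g y * kker y t)]
      exact antider_mul_kker' f g t
    simp_rw [h2]
  calc ∫ ω, (∫ x, f x * brW x ω) * (∫ x, g x * brW x ω) ∂P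
      = ∫ ω, (∫ z : ℝ × ℝ, (f z.1 * brW z.1 ω) * (g z.2 * brW z.2 ω) ∂ν) ∂P := by
        simp_rw [stepA]
    _ = ∫ z : ℝ × ℝ, (∫ ω, (f z.1 * brW z.1 ω) * (g z.2 * brW z.2 ω) ∂P) ∂ν :=
        (integral_integral_swap hKint).symm
    _ = ∫ z : ℝ × ℝ, f z.1 * g z.2 * (if z.1 * z.2 > 0 then min |z.1| |z.2| else 0) ∂ν := by
        simp_rw [hinner]
    _ = ∫ t : ℝ, antider f t * antider g t := hdet
end
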